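/- The map CoMn_N : L(C_N) → V_N(Σ_X), g ↦ Σ_{m ∈ C_N} g(m) B_m, is a linear order isomorphism between the ordered linear spaces L(C_N) (pointwise order) and V_N(Σ_X) (Bernstein order): it is a linear bijection, and for all g1, g2 ∈ L(C_N), g1 ≤ g2 pointwise if and only if CoMn_N(g2) − CoMn_N(g1) is either 0 or a positive linear combination of Bernstein gambles B_m, m ∈ C_N. -/

import Mathlib

namespace ExchPaper

/-- The set of count vectors `C_N = {m ∈ ℕ^X : Σ_z m_z = N}`. -/
def CNset (X : Type*) [Fintype X] (N : ℕ) : Set (X → ℕ) :=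
  {m | ∑ z, m z = N}

lemma CNset_finite (X : Type*) [Fintype X] (N : ℕ) : (CNset X N).Finite := by
  apply Set.Finite.subset (Set.Finite.pi (fun _ : X => Set.finite_Iic N))
  intro m hm
  simp only [Set.mem_pi, Set.mem_univ, Set.mem_Iic, forall_true_left]
  intro z
  calc m z ≤ ∑ w, m w := Finset.single_le_sum (fun i _ => Nat.zero_le (m i)) (Finset.mem_univ z)
  _ = N := hm

noncomputable instance (X : Type*) [Fintype X] (N : ℕ) : Fintype (CNset X N) :=
  (CNset_finite X N).fintype
/-- The `X`-simplex `Σ_X = {θ ∈ ℝ^X : θ ≥ 0, Σ_z θ_z = 1}`. -/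
def Splx (X : Type*) [Fintype X] : Set (X → ℝ) :=
  {θ | (∀ z, 0 ≤ θ z) ∧ ∑ z, θ z = 1}

/-- The multinomial coefficient `binom(N,m) = N!/∏_z m_z!`. -/
noncomputable def binomR {X : Type*} [Fintype X] (N : ℕ) (m : X → ℕ) : ℝ :=
  (N.factorial : ℝ) / ∏ z, ((m z).factorial : ℝ)

/-- The Bernstein gamble `B_m(θ) = binom(N,m) ∏_z θ_z^{m_z}` on the simplex `Σ_X`. -/
noncomputable def bern {X : Type*} [Fintype X] (N : ℕ) (m : X → ℕ) : Splx X → ℝ :=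
  fun θ => binomR N m * ∏ z, (θ.1 z) ^ (m z)

/-- `V_N(Σ_X)`: the linear space of gambles on `Σ_X` that are restrictions to `Σ_X` of
polynomials on `ℝ^X` with a representation of degree at most `N`. -/
def VN (X : Type*) [Fintype X] (N : ℕ) : Set (Splx X → ℝ) :=
  {h | ∃ p : MvPolynomial X ℝ, p.totalDegree ≤ N ∧ ∀ θ : Splx X, h θ = MvPolynomial.eval θ.1 p}
/-- The positive hull `Posi(S)`: all positive finite linear combinations
`Σ_{k=1}^n λ_k u_k` with `n ≥ 1`, `λ_k > 0` and `u_k ∈ S`. -/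
def Posi {W : Type*} [AddCommMonoid W] [Module ℝ W] (S : Set W) : Set W :=
  {v | ∃ (n : ℕ) (l : Fin n → ℝ) (u : Fin n → W), 0 < n ∧ (∀ k, 0 < l k) ∧
    (∀ k, u k ∈ S) ∧ v = ∑ k, l k • u k}

/-- `CoMn_N : L(C_N) → V_N(Σ_X)`, `g ↦ Σ_{m ∈ C_N} g(m) B_m`. -/
noncomputable def CoMn {X : Type*} [Fintype X] (N : ℕ) (g : CNset X N → ℝ) : Splx X → ℝ :=
  fun θ => ∑ m : CNset X N, g m * bern N m.1 θ

section Helpers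
-- auxiliary lemmas
variable {X : Type*} [Fintype X] {N : ℕ}

variable {X : Type*} [Fintype X] {N : ℕ}

lemma binomR_pos (N : ℕ) (m : X → ℕ) : 0 < binomR N m := by
  apply div_pos (by exact_mod_cast N.factorial_pos)
  exact Finset.prod_pos fun z _ => by exact_mod_cast (m z).factorial_pos

lemma binomR_ne (N : ℕ) (m : X → ℕ) : binomR N m ≠ 0 := (binomR_pos N m).ne'

lemma binomR_eq_multinomial (m : X → ℕ) (hm : ∑ z, m z = N) :
    binomR N m = (Nat.multinomial Finset.univ m : ℝ) := by
  have h := Nat.multinomial_spec Finset.univ m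
  rw [hm] at h
  have hprod : (0:ℝ) < ∏ z, ((m z).factorial : ℝ) :=
    Finset.prod_pos fun z _ => by exact_mod_cast (m z).factorial_pos
  rw [binomR, div_eq_iff hprod.ne', mul_comm]
  exact_mod_cast h.symm

lemma CNset_toFinset (X : Type*) [Fintype X] [DecidableEq X] (N : ℕ) :
    (CNset X N).toFinset = Finset.piAntidiag Finset.univ N := by
  ext m
  rw [Set.mem_toFinset]
  simp [CNset, Finset.mem_piAntidiag]

lemma sum_CNset [DecidableEq X] {M : Type*} [AddCommMonoid M] (f : (X → ℕ) → M) :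
    ∑ m : CNset X N, f m.1 = ∑ m ∈ Finset.piAntidiag Finset.univ N, f m := by
  rw [Finset.sum_set_coe (f := f), CNset_toFinset]

-- vanishing lemma
lemma vanish_fin : ∀ (n : ℕ) (p : MvPolynomial (Fin n) ℝ),
    (∀ x : Fin n → ℝ, (∀ i, 0 < x i) → MvPolynomial.eval x p = 0) → p = 0 := by
  intro n
  induction n with
  | zero =>
    intro p hp
    apply MvPolynomial.funext
    intro x
    rw [map_zero]
    exact hp x (fun i => i.elim0)
  | succ n ih =>
    intro p hp
    have key : ∀ y : Fin n → ℝ, (∀ i, 0 < y i) →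
        Polynomial.map (MvPolynomial.eval y) (MvPolynomial.finSuccEquiv ℝ n p) = 0 := by
      intro y hy
      apply Polynomial.eq_zero_of_infinite_isRoot
      apply Set.Infinite.mono (s := Set.Ioi (0:ℝ)) ?_ (Set.Ioi_infinite 0)
      intro a ha
      have h := hp (Fin.cons a y) (fun i => Fin.cases ha hy i)
      rw [MvPolynomial.eval_eq_eval_mv_eval'] at h
      exact h
    have hq : MvPolynomial.finSuccEquiv ℝ n p = 0 := by
      apply Polynomial.ext
      intro i
      rw [Polynomial.coeff_zero]
      apply ih
      intro y hy
      have h := congrArg (fun q => Polynomial.coeff q i) (key y hy)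
      simpa [Polynomial.coeff_map] using h
    have := congrArg (MvPolynomial.finSuccEquiv ℝ n).symm hq
    simpa using this

lemma vanish [Nonempty X] (p : MvPolynomial X ℝ)
    (hp : ∀ x : X → ℝ, (∀ z, 0 < x z) → MvPolynomial.eval x p = 0) : p = 0 := by
  classical
  let e := Fintype.equivFin X
  have h : MvPolynomial.rename e p = 0 := by
    apply vanish_fin
    intro x hx
    rw [MvPolynomial.eval_rename]
    exact hp (x ∘ e) (fun z => hx (e z))
  have hinj := MvPolynomial.rename_injective (R := ℝ) e e.injective
  simpa using hinj (by rw [h]; simp)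


open MvPolynomial in
noncomputable def Pg {X : Type*} [Fintype X] (N : ℕ) (g : CNset X N → ℝ) : MvPolynomial X ℝ :=
  ∑ m : CNset X N, monomial (Finsupp.equivFunOnFinite.symm m.1) (g m * binomR N m.1)

lemma eval_Pg (N : ℕ) (g : CNset X N → ℝ) (x : X → ℝ) :
    MvPolynomial.eval x (Pg N g) = ∑ m : CNset X N, g m * binomR N m.1 * ∏ z, x z ^ m.1 z := by
  rw [Pg, map_sum]
  refine Finset.sum_congr rfl fun m _ => ?_
  rw [MvPolynomial.eval_monomial]
  congr 1
  rw [Finsupp.prod_fintype]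
  · exact Finset.prod_congr rfl fun z _ => by simp
  · intro z; exact pow_zero _

lemma CoMn_eq_eval (N : ℕ) (g : CNset X N → ℝ) (θ : Splx X) :
    CoMn N g θ = MvPolynomial.eval θ.1 (Pg N g) := by
  rw [eval_Pg, CoMn]
  exact Finset.sum_congr rfl fun m _ => by rw [bern]; ring

lemma totalDegree_Pg (N : ℕ) (g : CNset X N → ℝ) : (Pg N g).totalDegree ≤ N := by
  refine le_trans (MvPolynomial.totalDegree_finset_sum _ _) (Finset.sup_le fun m _ => ?_)
  refine le_trans (MvPolynomial.totalDegree_monomial_le _ _) ?_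
  rw [Finsupp.sum_fintype _ _ (fun z => rfl)]
  exact le_of_eq (m.2 : ∑ z, m.1 z = N)

lemma coeff_Pg (N : ℕ) (g : CNset X N → ℝ) (m : CNset X N) :
    MvPolynomial.coeff (Finsupp.equivFunOnFinite.symm m.1) (Pg N g) = g m * binomR N m.1 := by
  classical
  rw [Pg, MvPolynomial.coeff_sum]
  rw [Finset.sum_eq_single m]
  · rw [MvPolynomial.coeff_monomial, if_pos rfl]
  · intro m' _ hne
    rw [MvPolynomial.coeff_monomial, if_neg]
    intro h
    exact hne (Subtype.ext (Finsupp.equivFunOnFinite.symm.injective h))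
  · intro h; exact absurd (Finset.mem_univ m) h

lemma CoMn_zero_iff [Nonempty X] (N : ℕ) (g : CNset X N → ℝ)
    (h : ∀ θ : Splx X, CoMn N g θ = 0) : ∀ m, g m = 0 := by
  have hP : Pg N g = 0 := by
    apply vanish
    intro x hx
    have hs : 0 < ∑ z, x z := Finset.sum_pos (fun z _ => hx z) Finset.univ_nonempty
    set s := ∑ z, x z with hsdef
    have hθ : (fun z => x z / s) ∈ Splx X := by
      constructor
      · intro z; exact div_nonneg (hx z).le hs.le
      · rw [← Finset.sum_div, div_self hs.ne']
    have hkey := h ⟨_, hθ⟩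
    rw [eval_Pg]
    have : ∀ m : CNset X N, g m * binomR N m.1 * ∏ z, x z ^ m.1 z
        = s ^ N * (g m * bern N m.1 ⟨_, hθ⟩) := by
      intro m
      have hx' : ∀ z, x z = s * (x z / s) := fun z => (mul_div_cancel₀ (x z) hs.ne').symm
      have : ∏ z, x z ^ m.1 z = s ^ N * ∏ z, (x z / s) ^ m.1 z := by
        calc ∏ z, x z ^ m.1 z = ∏ z, (s * (x z / s)) ^ m.1 z := by
              refine Finset.prod_congr rfl fun z _ => by rw [← hx' z]
        _ = (∏ z, s ^ m.1 z) * ∏ z, (x z / s) ^ m.1 z := by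
              rw [← Finset.prod_mul_distrib]
              exact Finset.prod_congr rfl fun z _ => mul_pow _ _ _
        _ = s ^ N * ∏ z, (x z / s) ^ m.1 z := by
              rw [Finset.prod_pow_eq_pow_sum, (m.2 : ∑ z, m.1 z = N)]
      rw [this, bern]; ring
    rw [Finset.sum_congr rfl (fun m _ => this m), ← Finset.mul_sum]
    rw [show (∑ m : CNset X N, g m * bern N m.1 ⟨_, hθ⟩) = CoMn N g ⟨_, hθ⟩ from rfl, hkey,
      mul_zero]
  intro m
  have := coeff_Pg N g m
  rw [hP] at this
  simp only [MvPolynomial.coeff_zero] at this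
  rcases mul_eq_zero.1 this.symm with h' | h'
  · exact h'
  · exact absurd h' (binomR_ne N m.1)

lemma CoMn_injective [Nonempty X] (N : ℕ) :
    Function.Injective (fun g : CNset X N → ℝ => CoMn N g) := by
  intro g g' h
  funext m
  have hz : ∀ θ : Splx X, CoMn N (fun m => g m - g' m) θ = 0 := by
    intro θ
    have : CoMn N g θ = CoMn N g' θ := congrFun h θ
    simp only [CoMn, sub_mul, Finset.sum_sub_distrib]
    rw [show (∑ m : CNset X N, g m * bern N m.1 θ) = CoMn N g θ from rfl,
      show (∑ m : CNset X N, g' m * bern N m.1 θ) = CoMn N g' θ from rfl, this, sub_self]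
  have := CoMn_zero_iff N _ hz m
  linarith


lemma monomial_mem [DecidableEq X] (N : ℕ) (k : X → ℕ) (hk : ∑ z, k z ≤ N) :
    ∃ g : CNset X N → ℝ, ∀ θ : Splx X, CoMn N g θ = ∏ z, θ.1 z ^ k z := by
  classical
  set M := N - ∑ z, k z with hM
  set G : (X → ℕ) → ℝ := fun m =>
    if ∀ z, k z ≤ m z then
      (Nat.multinomial Finset.univ (fun z => m z - k z) : ℝ) / binomR N m else 0 with hG
  refine ⟨fun m => G m.1, fun θ => ?_⟩
  have hsum : CoMn N (fun m => G m.1) θ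
      = ∑ m ∈ Finset.piAntidiag Finset.univ N, G m * bern N m θ :=
    sum_CNset (fun m => G m * bern N m θ)
  have hterm : ∀ m ∈ Finset.piAntidiag Finset.univ N, G m * bern N m θ =
      if ∀ z, k z ≤ m z then
        (Nat.multinomial Finset.univ (fun z => m z - k z) : ℝ) * ∏ z, θ.1 z ^ m z else 0 := by
    intro m _
    simp only [hG, bern]
    split_ifs with h
    · have hb := binomR_ne N m
      field_simp
    · rw [zero_mul]
  rw [hsum, Finset.sum_congr rfl hterm, ← Finset.sum_filter]
  have hRHS : (∏ z, θ.1 z ^ k z) = ∑ j ∈ Finset.piAntidiag Finset.univ M,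
      (Nat.multinomial Finset.univ j : ℝ) * ∏ z, θ.1 z ^ (k z + j z) := by
    have h1 : (1:ℝ) = (∑ z, θ.1 z) ^ M := by rw [θ.2.2, one_pow]
    calc ∏ z, θ.1 z ^ k z = (∏ z, θ.1 z ^ k z) * (∑ z, θ.1 z) ^ M := by
          rw [← h1, mul_one]
    _ = (∏ z, θ.1 z ^ k z) * ∑ j ∈ Finset.piAntidiag Finset.univ M,
          (Nat.multinomial Finset.univ j : ℝ) * ∏ z, θ.1 z ^ j z := by
        rw [Finset.sum_pow_eq_sum_piAntidiag]
    _ = _ := by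
        rw [Finset.mul_sum]
        refine Finset.sum_congr rfl fun j _ => ?_
        simp_rw [pow_add]
        rw [Finset.prod_mul_distrib]
        ring
  rw [hRHS]
  refine (Finset.sum_nbij' (i := fun j => fun z => k z + j z)
    (j := fun m => fun z => m z - k z) ?_ ?_ ?_ ?_ ?_).symm
  · intro j hj
    rw [Finset.mem_piAntidiag] at hj
    rw [Finset.mem_filter, Finset.mem_piAntidiag]
    refine ⟨⟨?_, fun i _ => Finset.mem_univ i⟩, fun z => Nat.le_add_right _ _⟩
    have hj1 : ∑ z, j z = M := hj.1
    rw [Finset.sum_add_distrib, hj1]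
    omega
  · intro m hm
    rw [Finset.mem_filter, Finset.mem_piAntidiag] at hm
    rw [Finset.mem_piAntidiag]
    refine ⟨?_, fun i _ => Finset.mem_univ i⟩
    have hm1 : ∑ z, m z = N := hm.1.1
    have : ∑ z, (m z - k z) = (∑ z, m z) - ∑ z, k z := by
      rw [eq_tsub_iff_add_eq_of_le (Finset.sum_le_sum fun z _ => hm.2 z),
        ← Finset.sum_add_distrib]
      exact Finset.sum_congr rfl fun z _ => Nat.sub_add_cancel (hm.2 z)
    rw [this, hm1]
  · intro j _
    funext z
    show k z + j z - k z = j z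
    omega
  · intro m hm
    rw [Finset.mem_filter] at hm
    funext z
    show k z + (m z - k z) = m z
    exact Nat.add_sub_cancel' (hm.2 z)
  · intro j _
    have h2 : (fun z => k z + j z - k z) = j := by funext z; omega
    show (Nat.multinomial Finset.univ j : ℝ) * ∏ z, θ.1 z ^ (k z + j z)
       = (Nat.multinomial Finset.univ (fun z => k z + j z - k z) : ℝ) * ∏ z, θ.1 z ^ (k z + j z)
    rw [h2]

lemma CoMn_surj [DecidableEq X] (N : ℕ) (p : MvPolynomial X ℝ) (hp : p.totalDegree ≤ N) :
    ∃ g : CNset X N → ℝ, ∀ θ : Splx X, CoMn N g θ = MvPolynomial.eval θ.1 p := by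
  classical
  have hmono : ∀ d : X →₀ ℕ, ∃ g : CNset X N → ℝ, d ∈ p.support →
      ∀ θ : Splx X, CoMn N g θ = ∏ z, θ.1 z ^ d z := by
    intro d
    by_cases hd : d ∈ p.support
    · have hdeg : ∑ z, d z ≤ N := by
        have := MvPolynomial.le_totalDegree hd
        rw [Finsupp.sum_fintype _ _ (fun z => rfl)] at this
        exact le_trans this hp
      obtain ⟨g, hg⟩ := monomial_mem N (fun z => d z) hdeg
      exact ⟨g, fun _ => hg⟩
    · exact ⟨0, fun h => absurd h hd⟩
  choose gk hgk using hmono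
  refine ⟨fun m => ∑ d ∈ p.support, MvPolynomial.coeff d p * gk d m, fun θ => ?_⟩
  rw [MvPolynomial.eval_eq']
  rw [CoMn]
  simp_rw [Finset.sum_mul, mul_assoc]
  rw [Finset.sum_comm]
  refine Finset.sum_congr rfl fun d hd => ?_
  rw [← Finset.mul_sum]
  congr 1
  exact hgk d hd θ


end Helpers

/-- `CoMn_N` is a linear order isomorphism between `L(C_N)` (pointwise order)
and `V_N(Σ_X)` (Bernstein order): it maps into `V_N(Σ_X)`, is linear and injective, is onto
`V_N(Σ_X)`, and `g1 ≤ g2` pointwise iff `CoMn_N(g2) − CoMn_N(g1)` is `0` or a positive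
linear combination of Bernstein gambles. -/
theorem statement_12 (X : Type*) [Fintype X] [Nonempty X] (N : ℕ) (hN : 0 < N) :
    (∀ g : CNset X N → ℝ, CoMn N g ∈ VN X N) ∧
    (∀ (a : ℝ) (g g' : CNset X N → ℝ), CoMn N (a • g + g') = a • CoMn N g + CoMn N g') ∧
    (Function.Injective (fun g : CNset X N → ℝ => CoMn N g)) ∧
    (∀ h ∈ VN X N, ∃ g : CNset X N → ℝ, CoMn N g = h) ∧
    (∀ g1 g2 : CNset X N → ℝ,
      (∀ m, g1 m ≤ g2 m) ↔
        (CoMn N g2 - CoMn N g1 = 0 ∨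
          CoMn N g2 - CoMn N g1 ∈ Posi {h | ∃ m ∈ CNset X N, h = bern N m})) := by
  classical
  refine ⟨?_, ?_, ?_, ?_, ?_⟩
  · intro g
    exact ⟨Pg N g, totalDegree_Pg N g, fun θ => CoMn_eq_eval N g θ⟩
  · intro a g g'
    funext θ
    simp only [CoMn, Pi.add_apply, Pi.smul_apply, smul_eq_mul]
    rw [Finset.mul_sum, ← Finset.sum_add_distrib]
    exact Finset.sum_congr rfl fun m _ => by ring
  · exact CoMn_injective N
  · rintro h ⟨p, hp, hev⟩
    obtain ⟨g, hg⟩ := CoMn_surj N p hp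
    exact ⟨g, funext fun θ => (hg θ).trans (hev θ).symm⟩
  · intro g1 g2
    constructor
    · intro hle
      by_cases hall : ∀ m, g2 m - g1 m = 0
      · left
        funext θ
        simp only [Pi.sub_apply, Pi.zero_apply, CoMn, ← Finset.sum_sub_distrib]
        refine Finset.sum_eq_zero fun m _ => ?_
        rw [← sub_mul, hall m, zero_mul]
      · right
        push_neg at hall
        set S : Finset (CNset X N) := Finset.univ.filter (fun m => g1 m < g2 m) with hS
        have hSne : S.Nonempty := by
          obtain ⟨m0, hm0⟩ := hall
          refine ⟨m0, ?_⟩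
          rw [hS, Finset.mem_filter]
          exact ⟨Finset.mem_univ _,
            lt_of_le_of_ne (hle m0) (fun h => hm0 (by rw [h, sub_self]))⟩
        refine ⟨S.card,
          fun k => g2 (S.equivFin.symm k : CNset X N) - g1 (S.equivFin.symm k : CNset X N),
          fun k => bern N ((S.equivFin.symm k : CNset X N) : X → ℕ),
          Finset.card_pos.2 hSne, ?_, ?_, ?_⟩
        · intro k
          have h2 := (Finset.mem_filter.1 (S.equivFin.symm k).2).2
          exact sub_pos.2 h2
        · intro k
          exact ⟨_, (S.equivFin.symm k : CNset X N).2, rfl⟩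
        · funext θ
          have hRHS : (∑ k, (g2 (S.equivFin.symm k : CNset X N)
                - g1 (S.equivFin.symm k : CNset X N))
              • bern N ((S.equivFin.symm k : CNset X N) : X → ℕ)) θ
              = ∑ k, (g2 (S.equivFin.symm k : CNset X N)
                - g1 (S.equivFin.symm k : CNset X N))
                * bern N ((S.equivFin.symm k : CNset X N) : X → ℕ) θ := by
            rw [Finset.sum_apply]
            rfl
          rw [hRHS]
          rw [Equiv.sum_comp S.equivFin.symm
            (fun x : ↥S => (g2 x - g1 x) * bern N (x : CNset X N).1 θ)]
          rw [Finset.sum_coe_sort S (fun m => (g2 m - g1 m) * bern N m.1 θ)]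
          rw [Finset.sum_subset (Finset.subset_univ S) ?aux]
          case aux =>
            intro m _ hm
            rw [hS, Finset.mem_filter] at hm
            push_neg at hm
            have := hm (Finset.mem_univ m)
            have heq : g2 m - g1 m = 0 := by linarith [hle m]
            rw [heq, zero_mul]
          simp only [Pi.sub_apply, CoMn, ← Finset.sum_sub_distrib, sub_mul]
    · rintro (h0 | ⟨n, l, u, hn, hl, hu, hveq⟩)
      · have heq : g2 = g1 := CoMn_injective N (sub_eq_zero.1 h0)
        intro m
        rw [heq]
      · have hmk : ∀ k, ∃ mv : CNset X N, u k = bern N mv.1 := by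
          intro k
          obtain ⟨mv, hmv, hvu⟩ := hu k
          exact ⟨⟨mv, hmv⟩, hvu⟩
        choose mk hmk using hmk
        set g : CNset X N → ℝ := fun m => ∑ k : Fin n, if mk k = m then l k else 0 with hg
        have hCg : CoMn N g = CoMn N (fun m => g2 m - g1 m) := by
          funext θ
          rw [CoMn]
          have h1 : ∀ m : CNset X N, g m * bern N m.1 θ
              = ∑ k : Fin n, if mk k = m then l k * bern N m.1 θ else 0 := by
            intro m
            rw [hg, Finset.sum_mul]
            exact Finset.sum_congr rfl fun k _ => by rw [ite_mul, zero_mul]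
          rw [Finset.sum_congr rfl (fun m _ => h1 m), Finset.sum_comm]
          have h2 : ∀ k : Fin n,
              (∑ m : CNset X N, if mk k = m then l k * bern N m.1 θ else 0)
              = l k * bern N (mk k).1 θ := by
            intro k
            rw [Finset.sum_ite_eq]
            simp
          rw [Finset.sum_congr rfl (fun k _ => h2 k)]
          have h3 : ∀ k : Fin n, l k * bern N (mk k).1 θ = (l k • u k) θ := by
            intro k
            rw [hmk k]
            rfl
          rw [Finset.sum_congr rfl (fun k _ => h3 k), ← Finset.sum_apply θ Finset.univ
            (fun k => l k • u k), ← hveq]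
          simp only [Pi.sub_apply, CoMn, sub_mul, Finset.sum_sub_distrib]
        have hgeq : g = fun m => g2 m - g1 m := CoMn_injective N hCg
        intro m
        have h0 : 0 ≤ g m := by
          rw [hg]
          refine Finset.sum_nonneg fun k _ => ?_
          split_ifs
          · exact (hl k).le
          · exact le_refl 0
        have := congrFun hgeq m
        linarith [this ▸ h0]

end ExchPaper
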